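/- arXiv:2203.02103 — 5 statements merged into one kernel-verified Lean document; each statement's English description precedes it below -/
import Mathlib

section
/- Let P, Q : ℝ → ℝ be polynomial functions and let j, k be natural numbers. Let T = {(x,y) ∈ ℝ² : x > 0, y > 0, x + y < 1} be the open reference triangle. Then ∫_T P((x−y)/(x+y))·(x+y)^j·x·y · Q((x−y)/(x+y))·(x+y)^k·x·y dx dy = (1/(32·(j+k+6))) · ∫_{−1}^{1} P(t)·Q(t)·(1−t)²·(1+t)² dt. Consequently, if P and Q are orthogonal on [−1,1] with respect to the Jacobi weight (1−t)²(1+t)² (e.g. Jacobi polynomials J_j^{2,2} and J_k^{2,2} with j ≠ k), the corresponding edge-based basis functions φ_j = P((λ₁−λ₂)/(λ₁+λ₂))(λ₁+λ₂)^j λ₁λ₂ and φ_k are L²-orthogonal on the triangle. -/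
open MeasureTheory Real

/-- The open reference triangle in `ℝ²`. -/
def refTriangle : Set (ℝ × ℝ) := {p | 0 < p.1 ∧ 0 < p.2 ∧ p.1 + p.2 < 1}

noncomputable def Fmap : ℝ × ℝ → ℝ × ℝ := fun p => (p.1 * (1 + p.2) * 2⁻¹, p.1 * (1 - p.2) * 2⁻¹)

noncomputable def Fder (p : ℝ × ℝ) : ℝ × ℝ →L[ℝ] ℝ × ℝ :=
  (((1 + p.2) / 2) • ContinuousLinearMap.fst ℝ ℝ ℝ
      + (p.1 / 2) • ContinuousLinearMap.snd ℝ ℝ ℝ).prod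
    (((1 - p.2) / 2) • ContinuousLinearMap.fst ℝ ℝ ℝ
      + (-(p.1 / 2)) • ContinuousLinearMap.snd ℝ ℝ ℝ)

lemma Fder_apply (p q : ℝ × ℝ) :
    Fder p q = ((1 + p.2) / 2 * q.1 + p.1 / 2 * q.2, (1 - p.2) / 2 * q.1 + -(p.1 / 2) * q.2) := by
  simp [Fder, smul_eq_mul]

lemma Fder_det (p : ℝ × ℝ) : (Fder p).det = -(p.1 / 2) := by
  have : (Fder p).det = LinearMap.det ((Fder p) : ℝ × ℝ →ₗ[ℝ] ℝ × ℝ) := rfl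
  rw [this, ← LinearMap.det_toMatrix (Module.Basis.finTwoProd ℝ), Matrix.det_fin_two]
  simp only [LinearMap.toMatrix_apply, Module.Basis.coe_finTwoProd_repr, ContinuousLinearMap.coe_coe]
  rw [Module.Basis.finTwoProd_zero, Module.Basis.finTwoProd_one]
  simp [Fder_apply]
  ring

lemma Fmap_hasFDerivAt (p : ℝ × ℝ) : HasFDerivAt Fmap (Fder p) p := by
  have h1 : HasFDerivAt (fun q : ℝ × ℝ => q.1 * (1 + q.2) * 2⁻¹)
      ((((1 + p.2) / 2) • ContinuousLinearMap.fst ℝ ℝ ℝ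
        + (p.1 / 2) • ContinuousLinearMap.snd ℝ ℝ ℝ)) p := by
    have := (hasFDerivAt_fst (𝕜 := ℝ) (E := ℝ) (F := ℝ) (p := p)).mul
      ((hasFDerivAt_const (1 : ℝ) p).add (hasFDerivAt_snd (𝕜 := ℝ)))
    have h := this.mul_const (2⁻¹ : ℝ)
    refine h.congr_fderiv ?_
    ext q <;> simp [smul_eq_mul] <;> ring
  have h2 : HasFDerivAt (fun q : ℝ × ℝ => q.1 * (1 - q.2) * 2⁻¹)
      ((((1 - p.2) / 2) • ContinuousLinearMap.fst ℝ ℝ ℝ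
        + (-(p.1 / 2)) • ContinuousLinearMap.snd ℝ ℝ ℝ)) p := by
    have := (hasFDerivAt_fst (𝕜 := ℝ) (E := ℝ) (F := ℝ) (p := p)).mul
      ((hasFDerivAt_const (1 : ℝ) p).sub (hasFDerivAt_snd (𝕜 := ℝ)))
    have h := this.mul_const (2⁻¹ : ℝ)
    refine h.congr_fderiv ?_
    ext q <;> simp [smul_eq_mul] <;> ring
  exact h1.prodMk h2

lemma Fmap_image :
    Fmap '' (Set.Ioo (0:ℝ) 1 ×ˢ Set.Ioo (-1:ℝ) 1) = refTriangle := by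
  ext ⟨x, y⟩
  constructor
  · rintro ⟨⟨s, t⟩, ⟨⟨hs0, hs1⟩, ht0, ht1⟩, h⟩
    simp only [Fmap, Prod.mk.injEq] at h
    obtain ⟨hx, hy⟩ := h
    simp only [Set.mem_Ioo] at *
    refine ⟨?_, ?_, ?_⟩ <;> simp only []
    · nlinarith
    · nlinarith
    · nlinarith
  · rintro ⟨hx, hy, hxy⟩
    simp only [refTriangle, Set.mem_setOf_eq] at *
    refine ⟨(x + y, (x - y) / (x + y)), ⟨⟨?_, ?_⟩, ?_, ?_⟩, ?_⟩ <;>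
      simp only [Set.mem_Ioo, Fmap]
    · linarith
    · linarith
    · have h : (0:ℝ) < x + y := by linarith
      rw [lt_div_iff₀ h]; linarith
    · have h : (0:ℝ) < x + y := by linarith
      rw [div_lt_one h]; linarith
    · have h : x + y ≠ 0 := by positivity
      refine Prod.ext ?_ ?_ <;> simp only [] <;> field_simp <;> ring

lemma Fmap_injOn : Set.InjOn Fmap (Set.Ioo (0:ℝ) 1 ×ˢ Set.Ioo (-1:ℝ) 1) := by
  rintro ⟨s, t⟩ ⟨⟨hs0, _⟩, _⟩ ⟨s', t'⟩ ⟨⟨hs0', _⟩, _⟩ h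
  simp only [Fmap, Prod.mk.injEq] at h
  obtain ⟨h1, h2⟩ := h
  have hs : s = s' := by nlinarith
  subst hs
  have ht : t = t' := by
    have : s * t = s * t' := by nlinarith
    exact mul_left_cancel₀ (ne_of_gt hs0) this
  rw [ht]

/-- Reduction of the `L²` inner product of two edge-based basis functions
`φ_j = P((λ₁−λ₂)/(λ₁+λ₂))(λ₁+λ₂)^j λ₁λ₂` on the reference triangle to a weighted
univariate integral with Jacobi weight `(1−t)²(1+t)²`. -/
theorem edge_basis_orthogonality (P Q : Polynomial ℝ) (j k : ℕ) :
    ∫ p in refTriangle,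
        (P.eval ((p.1 - p.2) / (p.1 + p.2)) * (p.1 + p.2) ^ j * p.1 * p.2) *
        (Q.eval ((p.1 - p.2) / (p.1 + p.2)) * (p.1 + p.2) ^ k * p.1 * p.2)
      = (1 / (32 * ((j : ℝ) + (k : ℝ) + 6))) *
        ∫ t in (-1 : ℝ)..1, P.eval t * Q.eval t * (1 - t) ^ 2 * (1 + t) ^ 2 := by
  have hS : MeasurableSet (Set.Ioo (0:ℝ) 1 ×ˢ Set.Ioo (-1:ℝ) 1) :=
    measurableSet_Ioo.prod measurableSet_Ioo
  rw [← Fmap_image,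
    integral_image_eq_integral_abs_det_fderiv_smul volume hS
      (fun p _ => (Fmap_hasFDerivAt p).hasFDerivWithinAt) Fmap_injOn]
  rw [setIntegral_congr_fun hS (g := fun p : ℝ × ℝ =>
      (p.1 ^ (j + k + 5)) *
        (P.eval p.2 * Q.eval p.2 * (1 - p.2) ^ 2 * (1 + p.2) ^ 2 / 32)) ?_]
  · rw [Measure.volume_eq_prod]
    rw [setIntegral_prod_mul (fun s : ℝ => s ^ (j + k + 5))
      (fun t : ℝ => P.eval t * Q.eval t * (1 - t) ^ 2 * (1 + t) ^ 2 / 32)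
      (Set.Ioo (0:ℝ) 1) (Set.Ioo (-1:ℝ) 1)]
    have e1 : ∫ s in Set.Ioo (0:ℝ) 1, s ^ (j + k + 5) = 1 / ((j:ℝ) + (k:ℝ) + 6) := by
      rw [← integral_Ioc_eq_integral_Ioo, ← intervalIntegral.integral_of_le zero_le_one,
        integral_pow]
      push_cast
      norm_num
      ring
    have e2 : ∫ t in Set.Ioo (-1:ℝ) 1,
        P.eval t * Q.eval t * (1 - t) ^ 2 * (1 + t) ^ 2 / 32
        = (∫ t in (-1:ℝ)..1, P.eval t * Q.eval t * (1 - t) ^ 2 * (1 + t) ^ 2) / 32 := by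
      rw [← integral_Ioc_eq_integral_Ioo,
        ← intervalIntegral.integral_of_le (by norm_num : (-1:ℝ) ≤ 1),
        intervalIntegral.integral_div]
    rw [e1, e2]
    have h6 : ((j:ℝ) + (k:ℝ) + 6) ≠ 0 := by positivity
    generalize (∫ t in (-1:ℝ)..1, P.eval t * Q.eval t * (1 - t) ^ 2 * (1 + t) ^ 2) = I
    field_simp
  · rintro ⟨s, t⟩ ⟨⟨hs0, hs1⟩, ht0, ht1⟩
    have hs0' : (0:ℝ) < s := hs0
    simp only [Fder_det, Fmap, smul_eq_mul]
    have hsne : s ≠ 0 := ne_of_gt hs0'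
    have hsum : s * (1 + t) * 2⁻¹ + s * (1 - t) * 2⁻¹ = s := by ring
    have hdiff : s * (1 + t) * 2⁻¹ - s * (1 - t) * 2⁻¹ = s * t := by ring
    have hq : s * t / s = t := by field_simp
    rw [hsum, hdiff, hq]
    rw [abs_of_nonpos (by nlinarith), neg_neg]
    ring
end

section
/- Let P, P', Q, Q', R, R' : ℝ → ℝ be polynomial functions and let n₁, n₁', n₂, n₂' be natural numbers. Let K = {(x,y,z) ∈ ℝ³ : x > 0, y > 0, z > 0, x + y + z < 1} be the open reference tetrahedron and write b(x,y,z) = x·y·z·(1−x−y−z). Then ∫_K [P(2x−1)·Q(2y/(1−x)−1)·(1−x)^{n₁}·R(2z/(1−x−y)−1)·(1−x−y)^{n₂}·b] · [P'(2x−1)·Q'(2y/(1−x)−1)·(1−x)^{n₁'}·R'(2z/(1−x−y)−1)·(1−x−y)^{n₂'}·b] dx dy dz = (∫_0^1 P(2s−1)·P'(2s−1)·s²·(1−s)^{n₁+n₁'+n₂+n₂'+8} ds) · (∫_0^1 Q(2t−1)·Q'(2t−1)·t²·(1−t)^{n₂+n₂'+5} dt) · (∫_0^1 R(2r−1)·R'(2r−1)·r²·(1−r)²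 dr). Consequently, with the Jacobi polynomial choices J_{n₀}^{2(n₁+n₂)+8,2}, J_{n₁}^{2n₂+5,2}, J_{n₂}^{2,2}, the interior basis functions φ_{n₀,n₁,n₂} of the tetrahedral elements are mutually L²-orthogonal on K. -/
open MeasureTheory Real

/-- The open reference tetrahedron in `ℝ³` (coordinates `(p.1, p.2.1, p.2.2)`). -/
def refTet : Set (ℝ × ℝ × ℝ) :=
  {p | 0 < p.1 ∧ 0 < p.2.1 ∧ 0 < p.2.2 ∧ p.1 + p.2.1 + p.2.2 < 1}

/-- The quartic bubble `b = x·y·z·(1−x−y−z)` on the reference tetrahedron. -/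
def bubble (p : ℝ × ℝ × ℝ) : ℝ := p.1 * p.2.1 * p.2.2 * (1 - p.1 - p.2.1 - p.2.2)

section DuffyAux

open Set

/-- A linear identification of `ℝ × ℝ × ℝ` with `Fin 3 → ℝ`. -/
noncomputable def e3 : (ℝ × ℝ × ℝ) ≃ₗ[ℝ] (Fin 3 → ℝ) where
  toFun p := ![p.1, p.2.1, p.2.2]
  invFun v := (v 0, v 1, v 2)
  map_add' p q := by funext i; fin_cases i <;> simp
  map_smul' c p := by funext i; fin_cases i <;> simp
  left_inv p := rfl
  right_inv v := by funext i; fin_cases i <;> simp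

theorem e3_apply (p : ℝ × ℝ × ℝ) : e3 p = ![p.1, p.2.1, p.2.2] := rfl

theorem e3_symm_apply (v : Fin 3 → ℝ) : e3.symm v = (v 0, v 1, v 2) := rfl

/-- The corresponding basis of `ℝ × ℝ × ℝ`. -/
noncomputable def b3 : Module.Basis (Fin 3) ℝ (ℝ × ℝ × ℝ) := Module.Basis.ofEquivFun e3

/-- The iterated Duffy transform, mapping the open unit cube onto the reference
tetrahedron via `x = s`, `y = (1 − s)·t`, `z = (1 − s)·(1 − t)·r`. -/
def duffy (p : ℝ × ℝ × ℝ) : ℝ × ℝ × ℝ :=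
  (p.1, (1 - p.1) * p.2.1, (1 - p.1) * (1 - p.2.1) * p.2.2)

/-- The (total) derivative of the iterated Duffy transform. -/
noncomputable def duffyDeriv (p : ℝ × ℝ × ℝ) : (ℝ × ℝ × ℝ) →L[ℝ] (ℝ × ℝ × ℝ) :=
  (ContinuousLinearMap.fst ℝ ℝ (ℝ × ℝ)).prod
    (((-p.2.1) • ContinuousLinearMap.fst ℝ ℝ (ℝ × ℝ) +
        (1 - p.1) • ((ContinuousLinearMap.fst ℝ ℝ ℝ).comp
          (ContinuousLinearMap.snd ℝ ℝ (ℝ × ℝ)))).prod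
      ((-((1 - p.2.1) * p.2.2)) • ContinuousLinearMap.fst ℝ ℝ (ℝ × ℝ) +
        (-((1 - p.1) * p.2.2)) • ((ContinuousLinearMap.fst ℝ ℝ ℝ).comp
          (ContinuousLinearMap.snd ℝ ℝ (ℝ × ℝ))) +
        ((1 - p.1) * (1 - p.2.1)) • ((ContinuousLinearMap.snd ℝ ℝ ℝ).comp
          (ContinuousLinearMap.snd ℝ ℝ (ℝ × ℝ)))))

theorem duffyDeriv_apply (p v : ℝ × ℝ × ℝ) :
    duffyDeriv p v = (v.1, -p.2.1 * v.1 + (1 - p.1) * v.2.1,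
      -((1 - p.2.1) * p.2.2) * v.1 + (-((1 - p.1) * p.2.2)) * v.2.1 +
        ((1 - p.1) * (1 - p.2.1)) * v.2.2) := by
  simp [duffyDeriv]

theorem hasFDerivAt_duffy (p : ℝ × ℝ × ℝ) : HasFDerivAt duffy (duffyDeriv p) p := by
  have h1 : HasFDerivAt (fun q : ℝ × ℝ × ℝ => q.1) (ContinuousLinearMap.fst ℝ ℝ (ℝ × ℝ)) p :=
    hasFDerivAt_fst
  have h21 : HasFDerivAt (fun q : ℝ × ℝ × ℝ => q.2.1)
      ((ContinuousLinearMap.fst ℝ ℝ ℝ).comp (ContinuousLinearMap.snd ℝ ℝ (ℝ × ℝ))) p :=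
    hasFDerivAt_snd.fst
  have h22 : HasFDerivAt (fun q : ℝ × ℝ × ℝ => q.2.2)
      ((ContinuousLinearMap.snd ℝ ℝ ℝ).comp (ContinuousLinearMap.snd ℝ ℝ (ℝ × ℝ))) p :=
    hasFDerivAt_snd.snd
  have hy : HasFDerivAt (fun q : ℝ × ℝ × ℝ => (1 - q.1) * q.2.1) _ p :=
    ((hasFDerivAt_const (1:ℝ) p).sub h1).mul h21
  have hz : HasFDerivAt (fun q : ℝ × ℝ × ℝ => (1 - q.1) * (1 - q.2.1) * q.2.2) _ p :=
    (((hasFDerivAt_const (1:ℝ) p).sub h1).mul ((hasFDerivAt_const (1:ℝ) p).sub h21)).mul h22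
  refine (h1.prodMk (hy.prodMk hz)).congr_fderiv ?_
  apply ContinuousLinearMap.ext
  intro v
  simp [duffyDeriv]
  constructor <;> ring

theorem duffyDeriv_det (p : ℝ × ℝ × ℝ) :
    (duffyDeriv p).det = (1 - p.1) ^ 2 * (1 - p.2.1) := by
  have : (duffyDeriv p).det = LinearMap.det ((duffyDeriv p) : (ℝ×ℝ×ℝ) →ₗ[ℝ] (ℝ×ℝ×ℝ)) := rfl
  rw [this, ← LinearMap.det_toMatrix b3]
  have hm : LinearMap.toMatrix b3 b3 ((duffyDeriv p) : (ℝ×ℝ×ℝ) →ₗ[ℝ] (ℝ×ℝ×ℝ)) =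
      !![1, 0, 0; -p.2.1, 1 - p.1, 0;
         -((1 - p.2.1) * p.2.2), -((1 - p.1) * p.2.2), (1 - p.1) * (1 - p.2.1)] := by
    ext i j
    fin_cases i <;> fin_cases j <;>
      simp [LinearMap.toMatrix_apply, b3, Module.Basis.coe_ofEquivFun, Module.Basis.ofEquivFun_repr_apply,
        duffyDeriv_apply, e3_apply, e3_symm_apply]
  rw [hm, Matrix.det_fin_three]
  simp
  ring

/-- The open unit cube in `ℝ³`. -/
def unitCube3 : Set (ℝ × ℝ × ℝ) := Ioo 0 1 ×ˢ Ioo 0 1 ×ˢ Ioo 0 1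

instance : Measure.IsAddHaarMeasure (volume : Measure (ℝ × ℝ × ℝ)) :=
  Measure.prod.instIsAddHaarMeasure _ _

theorem duffy_image : duffy '' unitCube3 = refTet := by
  ext ⟨x, y, z⟩
  constructor
  · rintro ⟨⟨s, t, r⟩, ⟨⟨hs0, hs1⟩, ⟨ht0, ht1⟩, hr0, hr1⟩, heq⟩
    simp only [duffy, Prod.mk.injEq] at heq
    obtain ⟨hx, hy, hz⟩ := heq
    subst hx hy hz
    simp only [refTet, mem_setOf_eq] at *
    have h1s : 0 < 1 - s := by linarith
    have h1t : 0 < 1 - t := by linarith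
    refine ⟨hs0, by positivity, by positivity,
      by nlinarith [mul_pos (mul_pos h1s h1t) (show (0:ℝ) < 1 - r by linarith)]⟩
  · rintro ⟨hx, hy, hz, hsum⟩
    have h1x : 0 < 1 - x := by dsimp only at *; nlinarith
    have h1xy : 0 < 1 - x - y := by dsimp only at *; nlinarith
    refine ⟨(x, y / (1 - x), z / (1 - x - y)), ⟨⟨hx, by dsimp only at *; nlinarith⟩,
      ⟨by positivity, ?_⟩, by positivity, ?_⟩, ?_⟩
    · rw [div_lt_one h1x]; dsimp only at *; nlinarith
    · rw [div_lt_one h1xy]; dsimp only at *; nlinarith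
    · simp only [duffy, Prod.mk.injEq]
      refine ⟨trivial, by field_simp, ?_⟩
      have : (1 - x) * (1 - y / (1 - x)) = 1 - x - y := by field_simp
      rw [this]
      field_simp

theorem duffy_injOn : InjOn duffy unitCube3 := by
  rintro ⟨s, t, r⟩ ⟨⟨hs0, hs1⟩, ⟨ht0, ht1⟩, _, _⟩ ⟨s', t', r'⟩
    ⟨⟨hs0', hs1'⟩, ⟨ht0', ht1'⟩, _, _⟩ heq
  simp only [duffy, Prod.mk.injEq] at heq
  obtain ⟨h1, h2, h3⟩ := heq
  subst h1
  have hs : (1 : ℝ) - s ≠ 0 := by linarith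
  have ht2 : t = t' := mul_left_cancel₀ hs h2
  subst ht2
  have htt : (1 : ℝ) - t ≠ 0 := by linarith
  have : r = r' := mul_left_cancel₀ (mul_ne_zero hs htt) h3
  subst this
  rfl

end DuffyAux

set_option maxHeartbeats 2000000 in
/-- Iterated-Duffy-transform factorization of the `L²` inner product of two interior
basis functions of the tetrahedral element into a product of three weighted
univariate integrals. -/
theorem interior_basis_orthogonality_3D (P P' Q Q' R R' : Polynomial ℝ)
    (n₁ n₁' n₂ n₂' : ℕ) :
    ∫ p in refTet,
        (P.eval (2 * p.1 - 1) * Q.eval (2 * p.2.1 / (1 - p.1) - 1) * (1 - p.1) ^ n₁ *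
          R.eval (2 * p.2.2 / (1 - p.1 - p.2.1) - 1) * (1 - p.1 - p.2.1) ^ n₂ * bubble p) *
        (P'.eval (2 * p.1 - 1) * Q'.eval (2 * p.2.1 / (1 - p.1) - 1) * (1 - p.1) ^ n₁' *
          R'.eval (2 * p.2.2 / (1 - p.1 - p.2.1) - 1) * (1 - p.1 - p.2.1) ^ n₂' * bubble p)
      = (∫ s in (0 : ℝ)..1,
            P.eval (2 * s - 1) * P'.eval (2 * s - 1) * s ^ 2 *
              (1 - s) ^ (n₁ + n₁' + n₂ + n₂' + 8)) *
        (∫ t in (0 : ℝ)..1,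
            Q.eval (2 * t - 1) * Q'.eval (2 * t - 1) * t ^ 2 * (1 - t) ^ (n₂ + n₂' + 5)) *
        (∫ r in (0 : ℝ)..1,
            R.eval (2 * r - 1) * R'.eval (2 * r - 1) * r ^ 2 * (1 - r) ^ 2) := by
  have hmeas : MeasurableSet unitCube3 :=
    measurableSet_Ioo.prod (measurableSet_Ioo.prod measurableSet_Ioo)
  rw [← duffy_image,
    integral_image_eq_integral_abs_det_fderiv_smul volume hmeas
      (fun p _ => (hasFDerivAt_duffy p).hasFDerivWithinAt) duffy_injOn]
  have key : ∀ p ∈ unitCube3,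
      |(duffyDeriv p).det| •
        ((P.eval (2 * (duffy p).1 - 1) *
            Q.eval (2 * (duffy p).2.1 / (1 - (duffy p).1) - 1) * (1 - (duffy p).1) ^ n₁ *
            R.eval (2 * (duffy p).2.2 / (1 - (duffy p).1 - (duffy p).2.1) - 1) *
            (1 - (duffy p).1 - (duffy p).2.1) ^ n₂ * bubble (duffy p)) *
          (P'.eval (2 * (duffy p).1 - 1) *
            Q'.eval (2 * (duffy p).2.1 / (1 - (duffy p).1) - 1) * (1 - (duffy p).1) ^ n₁' *
            R'.eval (2 * (duffy p).2.2 / (1 - (duffy p).1 - (duffy p).2.1) - 1) *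
            (1 - (duffy p).1 - (duffy p).2.1) ^ n₂' * bubble (duffy p))) =
      (P.eval (2 * p.1 - 1) * P'.eval (2 * p.1 - 1) * p.1 ^ 2 *
          (1 - p.1) ^ (n₁ + n₁' + n₂ + n₂' + 8)) *
        ((Q.eval (2 * p.2.1 - 1) * Q'.eval (2 * p.2.1 - 1) * p.2.1 ^ 2 *
            (1 - p.2.1) ^ (n₂ + n₂' + 5)) *
          (R.eval (2 * p.2.2 - 1) * R'.eval (2 * p.2.2 - 1) * p.2.2 ^ 2 *
            (1 - p.2.2) ^ 2)) := by
    rintro ⟨s, t, r⟩ ⟨⟨hs0, hs1⟩, ⟨ht0, ht1⟩, hr0, hr1⟩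
    dsimp only at hs0 hs1 ht0 ht1 hr0 hr1
    have h1s : (0:ℝ) < 1 - s := by linarith
    have h1t : (0:ℝ) < 1 - t := by linarith
    have e1 : 2 * ((1 - s) * t) / (1 - s) = 2 * t := by field_simp
    have e2 : 1 - s - (1 - s) * t = (1 - s) * (1 - t) := by ring
    have hne : ((1:ℝ) - s) * (1 - t) ≠ 0 := by positivity
    have e3 : 2 * ((1 - s) * (1 - t) * r) / ((1 - s) * (1 - t)) = 2 * r := by
      rw [div_eq_iff hne]; ring
    simp only [duffy, duffyDeriv_det, bubble]
    rw [e1, e2, e3, abs_of_pos (by positivity), smul_eq_mul, mul_pow ((1:ℝ) - s) (1 - t) n₂,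
      mul_pow ((1:ℝ) - s) (1 - t) n₂']
    ring
  rw [MeasureTheory.setIntegral_congr_fun hmeas key]
  rw [unitCube3, MeasureTheory.Measure.volume_eq_prod,
    MeasureTheory.setIntegral_prod_mul
      (fun s : ℝ => P.eval (2 * s - 1) * P'.eval (2 * s - 1) * s ^ 2 *
        (1 - s) ^ (n₁ + n₁' + n₂ + n₂' + 8))
      (fun q : ℝ × ℝ =>
        (Q.eval (2 * q.1 - 1) * Q'.eval (2 * q.1 - 1) * q.1 ^ 2 *
            (1 - q.1) ^ (n₂ + n₂' + 5)) *
          (R.eval (2 * q.2 - 1) * R'.eval (2 * q.2 - 1) * q.2 ^ 2 * (1 - q.2) ^ 2)),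
    MeasureTheory.Measure.volume_eq_prod,
    MeasureTheory.setIntegral_prod_mul
      (fun t : ℝ => Q.eval (2 * t - 1) * Q'.eval (2 * t - 1) * t ^ 2 *
        (1 - t) ^ (n₂ + n₂' + 5))
      (fun r : ℝ => R.eval (2 * r - 1) * R'.eval (2 * r - 1) * r ^ 2 * (1 - r) ^ 2)]
  rw [intervalIntegral.integral_of_le (zero_le_one),
    intervalIntegral.integral_of_le (zero_le_one),
    intervalIntegral.integral_of_le (zero_le_one),
    MeasureTheory.integral_Ioc_eq_integral_Ioo,
    MeasureTheory.integral_Ioc_eq_integral_Ioo,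
    MeasureTheory.integral_Ioc_eq_integral_Ioo]
  ring
end

section
/- Let p be a natural number and let w₁, w₂ be polynomials in ℝ[x,y] (i.e. MvPolynomial (Fin 2) ℝ) with total degree at most p such that ∂ₓw₁ + ∂ᵧw₂ = 0. Then there exists a polynomial φ ∈ ℝ[x,y] of total degree at most p + 1 such that w₁ = ∂ᵧφ and w₂ = −∂ₓφ; that is, every divergence-free polynomial vector field of degree ≤ p on ℝ² is the rotated gradient (curl) of a polynomial potential of degree ≤ p + 1. -/
open MvPolynomial

noncomputable def intg (i : Fin 2) (f : MvPolynomial (Fin 2) ℝ) : MvPolynomial (Fin 2) ℝ :=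
  (AddMonoidAlgebra.coeff f).sum fun m a => monomial (m + Finsupp.single i 1) (a / (m i + 1))

lemma intg_monomial (i : Fin 2) (m : Fin 2 →₀ ℕ) (a : ℝ) :
    intg i (monomial m a) = monomial (m + Finsupp.single i 1) (a / (m i + 1)) := by
  unfold intg
  rw [← single_eq_monomial, AddMonoidAlgebra.sum_single_index]
  simp

lemma intg_add (i : Fin 2) (f g : MvPolynomial (Fin 2) ℝ) :
    intg i (f + g) = intg i f + intg i g := by
  unfold intg
  rw [AddMonoidAlgebra.coeff_add, Finsupp.sum_add_index]
  · intro m _; simp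
  · intro m _ a b; rw [← map_add, add_div]

lemma intg_zero (i : Fin 2) : intg i 0 = 0 := by
  unfold intg; simp [Finsupp.sum_zero_index]

lemma pderiv_intg_self (i : Fin 2) (f : MvPolynomial (Fin 2) ℝ) :
    pderiv i (intg i f) = f := by
  induction f using MvPolynomial.induction_on' with
  | monomial m a =>
    rw [intg_monomial, pderiv_monomial]
    have h1 : (m + Finsupp.single i 1 : Fin 2 →₀ ℕ) i = m i + 1 := by simp
    have h2 : m + Finsupp.single i 1 - Finsupp.single i 1 = m := by
      ext j
      simp only [Finsupp.coe_add, Finsupp.coe_tsub, Pi.add_apply, Pi.sub_apply]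
      omega
    rw [h1, h2]
    congr 1
    have : ((m i : ℝ) + 1) ≠ 0 := by positivity
    push_cast
    field_simp
  | add f g hf hg => rw [intg_add, map_add, hf, hg]

lemma pderiv_intg_comm (i j : Fin 2) (hij : i ≠ j) (f : MvPolynomial (Fin 2) ℝ) :
    pderiv i (intg j f) = intg j (pderiv i f) := by
  induction f using MvPolynomial.induction_on' with
  | monomial m a =>
    rw [intg_monomial, pderiv_monomial, pderiv_monomial, intg_monomial]
    have h1 : (m + Finsupp.single j 1 : Fin 2 →₀ ℕ) i = m i := by
      simp [Finsupp.single_apply, hij.symm]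
    have h2 : (m - Finsupp.single i 1 : Fin 2 →₀ ℕ) j = m j := by
      simp [Finsupp.single_apply, hij]
    have h3 : m + Finsupp.single j 1 - Finsupp.single i 1
        = m - Finsupp.single i 1 + Finsupp.single j 1 := by
      ext k
      have hk : ¬(i = k ∧ j = k) := by rintro ⟨rfl, rfl⟩; exact hij rfl
      simp only [Finsupp.coe_add, Finsupp.coe_tsub, Pi.add_apply, Pi.sub_apply,
        Finsupp.single_apply]
      split_ifs with ha hb <;> simp_all
    rw [h1, h2, h3]
    congr 1
    ring
  | add f g hf hg => rw [intg_add, map_add, map_add, hf, hg, intg_add]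

lemma coeff_pderiv' (i : Fin 2) (f : MvPolynomial (Fin 2) ℝ) (m : Fin 2 →₀ ℕ) :
    coeff m (pderiv i f) = coeff (m + Finsupp.single i 1) f * ((m i : ℝ) + 1) := by
  induction f using MvPolynomial.induction_on' with
  | monomial s a =>
    rw [pderiv_monomial, coeff_monomial, coeff_monomial]
    split_ifs with h1 h2 h2
    · subst h2
      have : (m + Finsupp.single i 1 : Fin 2 →₀ ℕ) i = m i + 1 := by simp
      rw [this]; push_cast; ring
    · -- s - single i 1 = m but s ≠ m + single i 1 : then s i = 0
      have h1' : ∀ k, (s k) - (if i = k then 1 else 0) = m k := by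
        intro k
        have := DFunLike.congr_fun h1 k
        simpa [Finsupp.single_apply] using this
      have hsi : s i = 0 := by
        by_contra hne
        apply h2
        ext k
        simp only [Finsupp.coe_add, Pi.add_apply, Finsupp.single_apply]
        have := h1' k
        rcases eq_or_ne i k with rfl | hk
        · simp only [if_pos rfl] at this ⊢
          simp at this ⊢
          omega
        · simp only [if_neg hk] at this ⊢
          omega
      rw [hsi]; simp
    · exfalso; apply h1
      subst h2
      ext k
      simp only [Finsupp.coe_add, Finsupp.coe_tsub, Pi.add_apply, Pi.sub_apply,
        Finsupp.single_apply]
      omega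
    · ring
  | add f g hf hg => simp only [map_add, coeff_add, hf, hg]; ring

lemma support_intg (i : Fin 2) (f : MvPolynomial (Fin 2) ℝ) :
    (intg i f).support ⊆ f.support.image (· + Finsupp.single i 1) := by
  classical
  refine (MvPolynomial.support_sum).trans ?_
  intro m hm
  simp only [Finset.mem_biUnion] at hm
  obtain ⟨m', hm', hmem⟩ := hm
  have := MvPolynomial.support_monomial_subset hmem
  simp only [Finset.mem_singleton] at this
  subst this
  exact Finset.mem_image_of_mem _ hm'

lemma sum_add_single (m : Fin 2 →₀ ℕ) (i : Fin 2) :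
    (m + Finsupp.single i 1).sum (fun _ e => e) = m.sum (fun _ e => e) + 1 := by
  rw [Finsupp.sum_add_index (by simp) (by intros; rfl)]
  simp

lemma totalDegree_intg_le (i : Fin 2) (f : MvPolynomial (Fin 2) ℝ) :
    (intg i f).totalDegree ≤ f.totalDegree + 1 := by
  apply Finset.sup_le
  intro m hm
  obtain ⟨m', hm', rfl⟩ := Finset.mem_image.mp (support_intg i f hm)
  rw [sum_add_single]
  exact Nat.add_le_add_right (le_totalDegree hm') 1

lemma totalDegree_intg_pderiv_le (i : Fin 2) (f : MvPolynomial (Fin 2) ℝ) :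
    (intg i (pderiv i f)).totalDegree ≤ f.totalDegree := by
  apply Finset.sup_le
  intro m hm
  obtain ⟨m', hm', rfl⟩ := Finset.mem_image.mp (support_intg i (pderiv i f) hm)
  have hcoeff : coeff m' (pderiv i f) ≠ 0 := mem_support_iff.mp hm'
  rw [coeff_pderiv'] at hcoeff
  have hkey : m' + Finsupp.single i 1 ∈ f.support := by
    rw [mem_support_iff]
    intro h
    apply hcoeff
    rw [h, zero_mul]
  exact le_totalDegree hkey

/-- Polynomial Poincaré lemma in 2D: every divergence-free polynomial vector field
of degree ≤ p is the rotated gradient (curl) of a polynomial potential of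
degree ≤ p + 1. -/
theorem divfree_poly_is_curl (p : ℕ) (w₁ w₂ : MvPolynomial (Fin 2) ℝ)
    (hw₁ : w₁.totalDegree ≤ p) (hw₂ : w₂.totalDegree ≤ p)
    (hdiv : pderiv 0 w₁ + pderiv 1 w₂ = 0) :
    ∃ φ : MvPolynomial (Fin 2) ℝ, φ.totalDegree ≤ p + 1 ∧
      w₁ = pderiv 1 φ ∧ w₂ = -(pderiv 0 φ) := by
  set v : MvPolynomial (Fin 2) ℝ := w₂ - intg 1 (pderiv 1 w₂) with hv
  refine ⟨intg 1 w₁ - intg 0 v, ?_, ?_, ?_⟩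
  · -- degree bound
    have h1 : (intg 1 w₁).totalDegree ≤ p + 1 :=
      (totalDegree_intg_le 1 w₁).trans (by omega)
    have hvdeg : v.totalDegree ≤ p := by
      rw [hv, sub_eq_add_neg]
      refine (totalDegree_add _ _).trans ?_
      rw [totalDegree_neg]
      exact max_le hw₂ ((totalDegree_intg_pderiv_le 1 w₂).trans hw₂)
    have h2 : (intg 0 v).totalDegree ≤ p + 1 :=
      (totalDegree_intg_le 0 v).trans (by omega)
    rw [sub_eq_add_neg]
    refine (totalDegree_add _ _).trans ?_
    rw [totalDegree_neg]
    exact max_le h1 h2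
  · -- w₁ = pderiv 1 φ
    have hv1 : pderiv 1 v = 0 := by
      rw [hv, map_sub, pderiv_intg_self, sub_self]
    rw [map_sub, pderiv_intg_self, pderiv_intg_comm 1 0 (by decide), hv1, intg_zero, sub_zero]
  · -- w₂ = -(pderiv 0 φ)
    have h01 : pderiv 0 w₁ = -pderiv 1 w₂ := by linear_combination hdiv
    rw [map_sub, pderiv_intg_self, pderiv_intg_comm 0 1 (by decide), h01]
    have hneg : intg 1 (-pderiv 1 w₂) = -intg 1 (pderiv 1 w₂) := by
      have h := intg_add 1 (pderiv 1 w₂) (-pderiv 1 w₂)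
      rw [add_neg_cancel, intg_zero] at h
      linear_combination -h
    rw [hneg, hv]
    ring
end

section
/- Let p ≥ 5 be a natural number and let φ ∈ ℝ[x,y] (i.e. MvPolynomial (Fin 2) ℝ) be a polynomial of total degree at most p + 1. Suppose that φ and both of its first-order partial derivatives ∂ₓφ, ∂ᵧφ vanish at every point of each of the three lines {(x,y) : x = 0}, {(x,y) : y = 0}, and {(x,y) : x + y = 1}. Then there exists a polynomial ψ ∈ ℝ[x,y] of total degree at most p − 5 such that φ = x²·y²·(1−x−y)²·ψ. -/
open MvPolynomial

/-! ### Auxiliary lemmas -/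

section Degree

variable {R : Type*} [CommRing R] {σ : Type*}

private lemma bubble_hc_top_ne_zero (a : MvPolynomial σ R) (ha : a ≠ 0) :
    homogeneousComponent a.totalDegree a ≠ 0 := by
  obtain ⟨d, hd, hdeg⟩ := Finset.exists_mem_eq_sup a.support
    (support_nonempty.mpr ha) (fun m => m.sum fun _ e => e)
  have hcoeff : coeff d a ≠ 0 := mem_support_iff.mp hd
  have hdd : d.degree = a.totalDegree := by
    rw [totalDegree, hdeg]; rfl
  intro h0
  have := coeff_homogeneousComponent (φ := a) (n := a.totalDegree) d
  rw [h0, if_pos hdd] at this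
  exact hcoeff this.symm

private lemma bubble_sub_hc_lt (c : MvPolynomial σ R) :
    c - homogeneousComponent c.totalDegree c = 0 ∨
      (c - homogeneousComponent c.totalDegree c).totalDegree < c.totalDegree := by
  set k := c.totalDegree with hk
  set s := c - homogeneousComponent k c with hs
  have hsup : ∀ d ∈ s.support, (d.sum fun _ e => e) < k := by
    intro d hd
    have hcd : coeff d s ≠ 0 := mem_support_iff.mp hd
    rw [hs, coeff_sub, coeff_homogeneousComponent] at hcd
    by_cases hdk : d.degree = k
    · simp [hdk] at hcd
    · have hc0 : coeff d c ≠ 0 := by simpa [hdk] using hcd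
      have hle : (d.sum fun _ e => e) ≤ k := le_totalDegree (mem_support_iff.mpr hc0)
      have : d.degree = d.sum fun _ e => e := rfl
      omega
  by_cases h0 : s = 0
  · left; exact h0
  right
  obtain ⟨d0, hd0⟩ := support_nonempty.mpr h0
  have hkpos : 0 < k := lt_of_le_of_lt (Nat.zero_le _) (hsup d0 hd0)
  rw [totalDegree, Finset.sup_lt_iff (by simpa using hkpos)]
  exact hsup

private lemma bubble_totalDegree_mul_eq [IsDomain R] (a b : MvPolynomial σ R)
    (ha : a ≠ 0) (hb : b ≠ 0) :
    (a * b).totalDegree = a.totalDegree + b.totalDegree := by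
  have hane := bubble_hc_top_ne_zero a ha
  have hbne := bubble_hc_top_ne_zero b hb
  set m := a.totalDegree with hm
  set n := b.totalDegree with hn
  set A := homogeneousComponent m a with hA
  set B := homogeneousComponent n b with hB
  set a' := a - A with ha'
  set b' := b - B with hb'
  have htop : (A * B).IsHomogeneous (m + n) :=
    (homogeneousComponent_isHomogeneous m a).mul (homogeneousComponent_isHomogeneous n b)
  have htopne : A * B ≠ 0 := mul_ne_zero hane hbne
  have htopdeg : (A * B).totalDegree = m + n := htop.totalDegree htopne
  have hsplit : a * b = A * B + (a' * B + A * b' + a' * b') := by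
    rw [ha', hb']; ring
  have hr : (a' * B + A * b' + a' * b') = 0 ∨
      (a' * B + A * b' + a' * b').totalDegree < m + n := by
    have hAle : A.totalDegree ≤ m := (homogeneousComponent_isHomogeneous m a).totalDegree_le
    have hBle : B.totalDegree ≤ n := (homogeneousComponent_isHomogeneous n b).totalDegree_le
    rcases bubble_sub_hc_lt a with h1 | h1 <;> rcases bubble_sub_hc_lt b with h2 | h2
    · left; rw [← ha'] at h1; rw [← hb'] at h2; rw [h1, h2]; ring
    · right; rw [← ha'] at h1; rw [← hb'] at *
      rw [h1]
      simpa using lt_of_le_of_lt (totalDegree_mul A b') (by omega)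
    · right; rw [← hb'] at h2; rw [← ha'] at *
      rw [h2]
      simpa using lt_of_le_of_lt (totalDegree_mul a' B) (by omega)
    · right; rw [← ha'] at h1; rw [← hb'] at h2
      have t1 : (a' * B).totalDegree < m + n :=
        lt_of_le_of_lt (totalDegree_mul a' B) (by omega)
      have t2 : (A * b').totalDegree < m + n :=
        lt_of_le_of_lt (totalDegree_mul A b') (by omega)
      have t3 : (a' * b').totalDegree < m + n :=
        lt_of_le_of_lt (totalDegree_mul a' b') (by omega)
      calc (a' * B + A * b' + a' * b').totalDegree
          ≤ max (max (a' * B).totalDegree (A * b').totalDegree) (a' * b').totalDegree :=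
            le_trans (totalDegree_add _ _) (by gcongr; exact totalDegree_add _ _)
        _ < m + n := by omega
  rcases hr with hr0 | hrlt
  · rw [hsplit, hr0, add_zero, htopdeg]
  · rw [hsplit]
    rw [totalDegree_add_eq_left_of_totalDegree_lt (by rw [htopdeg]; exact hrlt), htopdeg]

end Degree

/-! ### Divisibility by `X 0` from vanishing on the line `x = 0` -/

private lemma bubble_X0_dvd (φ : MvPolynomial (Fin 2) ℝ) (h : ∀ y : ℝ, eval ![0, y] φ = 0) :
    ∃ ψ, φ = X 0 * ψ := by
  have key : (finSuccEquiv ℝ 1 φ).coeff 0 = 0 := by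
    apply MvPolynomial.funext (q := 0)
    intro v
    have h2 := h (v 0)
    have hv : ![(0:ℝ), v 0] = Fin.cons (0:ℝ) v := by
      funext i; fin_cases i <;> simp [Fin.cons]
      · exact (congrArg v (Subsingleton.elim _ _))
    rw [hv, eval_eq_eval_mv_eval'] at h2
    simpa [Polynomial.eval_map, Polynomial.coeff_zero_eq_eval_zero] using h2
  obtain ⟨g, hg⟩ := Polynomial.X_dvd_iff.mpr key
  refine ⟨(finSuccEquiv ℝ 1).symm g, ?_⟩
  apply (finSuccEquiv ℝ 1).injective
  rw [hg]
  simp [finSuccEquiv_X_zero]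

private lemma bubble_X0_sq_dvd (φ : MvPolynomial (Fin 2) ℝ)
    (h0 : ∀ y : ℝ, eval ![0, y] φ = 0)
    (h1 : ∀ y : ℝ, eval ![0, y] (pderiv 0 φ) = 0) :
    ∃ ψ, φ = X 0 ^ 2 * ψ := by
  obtain ⟨ψ₁, rfl⟩ := bubble_X0_dvd φ h0
  have h1' : ∀ y : ℝ, eval ![0, y] ψ₁ = 0 := by
    intro y
    have := h1 y
    rw [pderiv_mul, pderiv_X] at this
    simpa using this
  obtain ⟨ψ₂, rfl⟩ := bubble_X0_dvd ψ₁ h1'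
  exact ⟨ψ₂, by ring⟩

/-! ### The substitution `(x, y) ↦ (1 - x - y, y)` -/

private noncomputable def bubbleT : MvPolynomial (Fin 2) ℝ →ₐ[ℝ] MvPolynomial (Fin 2) ℝ :=
  aeval ![1 - X 0 - X 1, X 1]

private lemma bubbleT_X0 : bubbleT (X 0) = 1 - X 0 - X 1 := by simp [bubbleT]

private lemma bubbleT_T (q : MvPolynomial (Fin 2) ℝ) : bubbleT (bubbleT q) = q := by
  have h : bubbleT.comp bubbleT = AlgHom.id ℝ _ := by
    apply MvPolynomial.algHom_ext
    intro i
    fin_cases i <;> simp [bubbleT] <;> ring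
  calc bubbleT (bubbleT q) = (bubbleT.comp bubbleT) q := rfl
    _ = q := by rw [h]; rfl

private lemma bubble_eval_aeval (g : Fin 2 → MvPolynomial (Fin 2) ℝ) (v : Fin 2 → ℝ)
    (q : MvPolynomial (Fin 2) ℝ) :
    eval v (aeval g q) = eval (fun i => eval v (g i)) q := by
  induction q using MvPolynomial.induction_on with
  | C a => simp [algebraMap_eq]
  | add p q hp hq => simp only [map_add, eval_add, hp, hq]
  | mul_X p i hp => simp only [map_mul, eval_mul, hp, aeval_X, eval_X]

private lemma bubble_pderiv0_T (q : MvPolynomial (Fin 2) ℝ) :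
    pderiv 0 (bubbleT q) = - bubbleT (pderiv 0 q) := by
  induction q using MvPolynomial.induction_on with
  | C a => simp [bubbleT, algebraMap_eq]
  | add p q hp hq => simp only [map_add, hp, hq]; ring
  | mul_X p i hp =>
    rw [map_mul, pderiv_mul, hp, pderiv_mul, map_add, map_mul, map_mul]
    fin_cases i <;> simp [bubbleT, pderiv_X] <;> ring

/-! ### Primality of the linear factors -/

private lemma bubble_prime_X0 : Prime (X 0 : MvPolynomial (Fin 2) ℝ) := by
  rw [← MulEquiv.prime_iff (finSuccEquiv ℝ 1).toMulEquiv]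
  show Prime (finSuccEquiv ℝ 1 (X 0))
  rw [finSuccEquiv_X_zero]
  exact Polynomial.prime_X

private lemma bubble_prime_X1 : Prime (X 1 : MvPolynomial (Fin 2) ℝ) := by
  have h := (MulEquiv.prime_iff (renameEquiv ℝ (Equiv.swap (0 : Fin 2) 1)).toMulEquiv
    (p := (X 0 : MvPolynomial (Fin 2) ℝ))).mpr bubble_prime_X0
  have e : (renameEquiv ℝ (Equiv.swap (0 : Fin 2) 1)).toMulEquiv (X 0) = X 1 := by
    show rename (Equiv.swap (0:Fin 2) 1) (X 0) = X 1
    rw [rename_X, Equiv.swap_apply_left]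
  rwa [e] at h

private noncomputable def bubbleTequiv : MvPolynomial (Fin 2) ℝ ≃ₐ[ℝ] MvPolynomial (Fin 2) ℝ :=
  AlgEquiv.ofAlgHom bubbleT bubbleT
    (by apply MvPolynomial.algHom_ext; intro i; fin_cases i <;> simp [bubbleT] <;> ring)
    (by apply MvPolynomial.algHom_ext; intro i; fin_cases i <;> simp [bubbleT] <;> ring)

private lemma bubble_prime_c : Prime (1 - X 0 - X 1 : MvPolynomial (Fin 2) ℝ) := by
  have h := (MulEquiv.prime_iff bubbleTequiv.toMulEquiv
    (p := (X 0 : MvPolynomial (Fin 2) ℝ))).mpr bubble_prime_X0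
  have e : bubbleTequiv.toMulEquiv (X 0) = 1 - X 0 - X 1 := bubbleT_X0
  rwa [e] at h

private lemma bubble_not_dvd_X0 : ¬ (X 1 : MvPolynomial (Fin 2) ℝ) ∣ X 0 := by
  rintro ⟨t, ht⟩
  have := congrArg (eval ![(1:ℝ), 0]) ht
  simp at this

private lemma bubble_c_not_dvd_X0 : ¬ (1 - X 0 - X 1 : MvPolynomial (Fin 2) ℝ) ∣ X 0 := by
  rintro ⟨t, ht⟩
  have := congrArg (eval ![(1:ℝ), 0]) ht
  simp at this

private lemma bubble_c_not_dvd_X1 : ¬ (1 - X 0 - X 1 : MvPolynomial (Fin 2) ℝ) ∣ X 1 := by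
  rintro ⟨t, ht⟩
  have := congrArg (eval ![(0:ℝ), 1]) ht
  simp at this

/-- Cancellation: if `q` is a prime not dividing `a` and `q^2 ∣ a * m`, then `q^2 ∣ m`. -/
private lemma bubble_sq_dvd_cancel {α : Type*} [CommMonoidWithZero α] [IsCancelMulZero α] {q a m : α}
    (hq : Prime q) (hqa : ¬ q ∣ a) (h : q ^ 2 ∣ a * m) : q ^ 2 ∣ m := by
  have hq1 : q ∣ m := by
    have : q ∣ a * m := dvd_trans (dvd_pow_self q two_ne_zero) h
    rcases hq.dvd_mul.mp this with h' | h'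
    · exact absurd h' hqa
    · exact h'
  obtain ⟨m1, rfl⟩ := hq1
  have h2 : q ∣ a * m1 := by
    have hh : q * q ∣ q * (a * m1) := by
      rw [← pow_two, mul_left_comm]; exact h
    exact (mul_dvd_mul_iff_left hq.ne_zero).mp hh
  rcases hq.dvd_mul.mp h2 with h' | h'
  · exact absurd h' hqa
  · obtain ⟨m2, rfl⟩ := h'
    exact ⟨m2, by rw [← mul_assoc, ← pow_two]⟩

/-! ### Main theorem -/

/-- A polynomial of degree ≤ p+1 (p ≥ 5) vanishing together with its gradient on the
three lines `x = 0`, `y = 0`, `x + y = 1` is a multiple of the squared cubic bubble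
`x²y²(1−x−y)²`, with quotient of degree ≤ p − 5. -/
theorem bubble_factorization (p : ℕ) (hp : 5 ≤ p) (φ : MvPolynomial (Fin 2) ℝ)
    (hdeg : φ.totalDegree ≤ p + 1)
    (h₁ : ∀ y : ℝ, eval ![0, y] φ = 0 ∧ eval ![0, y] (pderiv 0 φ) = 0 ∧
      eval ![0, y] (pderiv 1 φ) = 0)
    (h₂ : ∀ x : ℝ, eval ![x, 0] φ = 0 ∧ eval ![x, 0] (pderiv 0 φ) = 0 ∧
      eval ![x, 0] (pderiv 1 φ) = 0)
    (h₃ : ∀ x y : ℝ, x + y = 1 → eval ![x, y] φ = 0 ∧ eval ![x, y] (pderiv 0 φ) = 0 ∧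
      eval ![x, y] (pderiv 1 φ) = 0) :
    ∃ ψ : MvPolynomial (Fin 2) ℝ, ψ.totalDegree ≤ p - 5 ∧
      φ = (X 0) ^ 2 * (X 1) ^ 2 * (1 - X 0 - X 1) ^ 2 * ψ := by
  -- Step 1: X 0 ^ 2 divides φ
  have hdvd1 : (X 0 : MvPolynomial (Fin 2) ℝ) ^ 2 ∣ φ := by
    obtain ⟨ψ, hψ⟩ := bubble_X0_sq_dvd φ (fun y => (h₁ y).1) (fun y => (h₁ y).2.1)
    exact ⟨ψ, hψ⟩
  -- Step 2: X 1 ^ 2 divides φ, via the swap of the two variables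
  have hdvd2 : (X 1 : MvPolynomial (Fin 2) ℝ) ^ 2 ∣ φ := by
    set sw : Fin 2 → Fin 2 := ⇑(Equiv.swap (0 : Fin 2) 1) with hsw
    have hswinj : Function.Injective sw := (Equiv.swap (0 : Fin 2) 1).injective
    have hcomp : ∀ y : ℝ, (![0, y] ∘ sw) = ![y, 0] := by
      intro y; funext i; fin_cases i <;> simp [hsw]
    have hv0 : ∀ y : ℝ, eval ![0, y] (rename sw φ) = 0 := by
      intro y; rw [eval_rename, hcomp]; exact (h₂ y).1
    have hv1 : ∀ y : ℝ, eval ![0, y] (pderiv 0 (rename sw φ)) = 0 := by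
      intro y
      have hr : pderiv 0 (rename sw φ) = rename sw (pderiv 1 φ) := by
        have := pderiv_rename hswinj (1 : Fin 2) φ
        rw [show sw 1 = 0 from Equiv.swap_apply_right 0 1] at this
        exact this
      rw [hr, eval_rename, hcomp]
      exact (h₂ y).2.2
    obtain ⟨ψ, hψ⟩ := bubble_X0_sq_dvd (rename sw φ) hv0 hv1
    refine ⟨rename sw ψ, ?_⟩
    have : rename sw (rename sw φ) = rename sw (X 0 ^ 2 * ψ) := congrArg _ hψ
    rw [rename_rename] at this
    have hid : sw ∘ sw = id := by
      funext i; simp [hsw]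
    rw [hid, rename_id, AlgHom.id_apply] at this
    rw [this]
    simp [hsw, Equiv.swap_apply_left]
  -- Step 3: (1 - X 0 - X 1) ^ 2 divides φ, via the substitution T
  have hdvd3 : (1 - X 0 - X 1 : MvPolynomial (Fin 2) ℝ) ^ 2 ∣ φ := by
    have hv0 : ∀ y : ℝ, eval ![0, y] (bubbleT φ) = 0 := by
      intro y
      rw [show bubbleT φ = aeval ![1 - X 0 - X 1, X 1] φ from rfl, bubble_eval_aeval]
      have : (fun i => eval ![0, y] ((![1 - X 0 - X 1, X 1] : Fin 2 → _) i)) = ![1 - y, y] := by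
        funext i; fin_cases i <;> simp
      rw [this]
      exact (h₃ (1 - y) y (by ring)).1
    have hv1 : ∀ y : ℝ, eval ![0, y] (pderiv 0 (bubbleT φ)) = 0 := by
      intro y
      rw [bubble_pderiv0_T, eval_neg,
        show bubbleT (pderiv 0 φ) = aeval ![1 - X 0 - X 1, X 1] (pderiv 0 φ) from rfl,
        bubble_eval_aeval]
      have : (fun i => eval ![0, y] ((![1 - X 0 - X 1, X 1] : Fin 2 → _) i)) = ![1 - y, y] := by
        funext i; fin_cases i <;> simp
      rw [this]
      rw [(h₃ (1 - y) y (by ring)).2.1, neg_zero]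
    obtain ⟨ψ, hψ⟩ := bubble_X0_sq_dvd (bubbleT φ) hv0 hv1
    refine ⟨bubbleT ψ, ?_⟩
    have := congrArg bubbleT hψ
    rw [bubbleT_T] at this
    rw [this, map_mul, map_pow, bubbleT_X0]
  -- Combine the three divisibilities
  obtain ⟨m, hm⟩ := hdvd1
  have hdvd2' : (X 1 : MvPolynomial (Fin 2) ℝ) ^ 2 ∣ m := by
    apply bubble_sq_dvd_cancel bubble_prime_X1 (a := (X 0 : MvPolynomial (Fin 2) ℝ) ^ 2)
    · intro h
      exact bubble_not_dvd_X0 (bubble_prime_X1.dvd_of_dvd_pow h)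
    · rw [← hm]; exact hdvd2
  obtain ⟨m2, hm2⟩ := hdvd2'
  have hφ : φ = (X 0 ^ 2 * X 1 ^ 2) * m2 := by rw [hm, hm2]; ring
  have hdvd3' : (1 - X 0 - X 1 : MvPolynomial (Fin 2) ℝ) ^ 2 ∣ m2 := by
    apply bubble_sq_dvd_cancel bubble_prime_c (a := (X 0 : MvPolynomial (Fin 2) ℝ) ^ 2 * X 1 ^ 2)
    · intro h
      rcases bubble_prime_c.dvd_mul.mp h with h' | h'
      · exact bubble_c_not_dvd_X0 (bubble_prime_c.dvd_of_dvd_pow h')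
      · exact bubble_c_not_dvd_X1 (bubble_prime_c.dvd_of_dvd_pow h')
    · rw [← hφ]; exact hdvd3
  obtain ⟨ψ, hψ⟩ := hdvd3'
  have hfact : φ = (X 0) ^ 2 * (X 1) ^ 2 * (1 - X 0 - X 1) ^ 2 * ψ := by
    rw [hφ, hψ]; ring
  refine ⟨ψ, ?_, hfact⟩
  -- Degree bound
  by_cases hψ0 : ψ = 0
  · simp [hψ0]
  have hb0 : ((X 0 : MvPolynomial (Fin 2) ℝ)) ^ 2 * (X 1) ^ 2 * (1 - X 0 - X 1) ^ 2 ≠ 0 := by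
    apply mul_ne_zero (mul_ne_zero (pow_ne_zero _ bubble_prime_X0.ne_zero)
      (pow_ne_zero _ bubble_prime_X1.ne_zero)) (pow_ne_zero _ bubble_prime_c.ne_zero)
  have hdb : ((X 0 : MvPolynomial (Fin 2) ℝ) ^ 2 * (X 1) ^ 2 *
      (1 - X 0 - X 1) ^ 2).totalDegree = 6 := by
    have hc_deg : (1 - X 0 - X 1 : MvPolynomial (Fin 2) ℝ).totalDegree = 1 := by
      apply le_antisymm
      · have hrw : (1 - X 0 - X 1 : MvPolynomial (Fin 2) ℝ) = 1 + (-(X 0)) + (-(X 1)) := by ring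
        rw [hrw]
        refine le_trans (totalDegree_add _ _) ?_
        have hn0 : (-(X 0) : MvPolynomial (Fin 2) ℝ).totalDegree ≤ 1 := by
          refine le_trans (totalDegree_le_of_support_subset ?_) (le_of_eq (totalDegree_X 0))
          rw [support_neg]
        have hn1 : (-(X 1) : MvPolynomial (Fin 2) ℝ).totalDegree ≤ 1 := by
          refine le_trans (totalDegree_le_of_support_subset ?_) (le_of_eq (totalDegree_X 1))
          rw [support_neg]
        have h1d : (1 + (-(X 0)) : MvPolynomial (Fin 2) ℝ).totalDegree ≤ 1 := by
          refine le_trans (totalDegree_add _ _) ?_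
          simp [totalDegree_one, hn0]
        simp only [max_le_iff]
        exact ⟨h1d, hn1⟩
      · have hc : coeff (Finsupp.single (0 : Fin 2) 1) (1 - X 0 - X 1 : MvPolynomial (Fin 2) ℝ)
            = -1 := by
          rw [coeff_sub, coeff_sub]
          rw [coeff_X', coeff_X']
          have h01 : (0 : Fin 2 →₀ ℕ) ≠ Finsupp.single (0 : Fin 2) 1 :=
            fun h => one_ne_zero (Finsupp.single_eq_zero.mp h.symm)
          simp [coeff_one, Finsupp.single_eq_single_iff, h01]
        have hmem : Finsupp.single (0 : Fin 2) 1 ∈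
            (1 - X 0 - X 1 : MvPolynomial (Fin 2) ℝ).support :=
          mem_support_iff.mpr (by rw [hc]; norm_num)
        have := le_totalDegree hmem
        simpa using this
    have hcne : (1 - X 0 - X 1 : MvPolynomial (Fin 2) ℝ) ≠ 0 := bubble_prime_c.ne_zero
    have hcsq : ((1 - X 0 - X 1 : MvPolynomial (Fin 2) ℝ) ^ 2).totalDegree = 2 := by
      rw [pow_two, bubble_totalDegree_mul_eq _ _ hcne hcne, hc_deg]
    have hx01 : ((X 0 : MvPolynomial (Fin 2) ℝ) ^ 2 * (X 1) ^ 2).totalDegree = 4 := by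
      rw [bubble_totalDegree_mul_eq _ _ (pow_ne_zero _ bubble_prime_X0.ne_zero)
        (pow_ne_zero _ bubble_prime_X1.ne_zero), totalDegree_X_pow, totalDegree_X_pow]
    rw [bubble_totalDegree_mul_eq _ _
      (mul_ne_zero (pow_ne_zero _ bubble_prime_X0.ne_zero)
        (pow_ne_zero _ bubble_prime_X1.ne_zero))
      (pow_ne_zero _ hcne), hx01, hcsq]
  have := bubble_totalDegree_mul_eq _ ψ hb0 hψ0
  rw [← hfact, hdb] at this
  omega
end

section
/- Let p ≥ 1 be a natural number. In the ℝ-vector space of polynomial vector fields Fin 3 → MvPolynomial (Fin 3) ℝ, consider the Raviart–Thomas shape-function space RT_p := {q : each component of q has total degree ≤ p−1} + {(x₁·r, x₂·r, x₃·r) : r ∈ MvPolynomial (Fin 3) ℝ, total degree of r ≤ p−1}, the sum of two finite-dimensional subspaces. Then dim_ℝ RT_p = p·(p+1)·(p+3)/2. -/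
open MvPolynomial

set_option synthInstance.maxHeartbeats 1000000 in
set_option maxHeartbeats 1000000 in
section

/-- Vector fields with polynomial components of total degree at most `k`,
as a subspace of `Fin 3 → MvPolynomial (Fin 3) ℝ`. -/
noncomputable def polyVec (k : ℕ) : Submodule ℝ (Fin 3 → MvPolynomial (Fin 3) ℝ) :=
  Submodule.pi Set.univ (fun _ => restrictTotalDegree (Fin 3) ℝ k)

/-- The linear map `r ↦ (x₁·r, x₂·r, x₃·r)`. -/
noncomputable def mulByX :
    MvPolynomial (Fin 3) ℝ →ₗ[ℝ] (Fin 3 → MvPolynomial (Fin 3) ℝ) :=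
  LinearMap.pi (fun i => LinearMap.mulLeft ℝ (X i))

/-- The Raviart–Thomas shape-function space `RT_p = (P_{p−1})³ + x·P_{p−1}`. -/
noncomputable def RTSpace (p : ℕ) : Submodule ℝ (Fin 3 → MvPolynomial (Fin 3) ℝ) :=
  polyVec (p - 1) ⊔ Submodule.map mulByX (restrictTotalDegree (Fin 3) ℝ (p - 1))

/-! ### Combinatorial lemmas -/

private lemma two_mul_choose_two (n : ℕ) : 2 * (n+2).choose 2 = (n+1)*(n+2) := by
  induction n with
  | zero => rfl
  | succ m ih =>
    rw [show m+1+2 = (m+2)+1 from rfl, Nat.choose_succ_succ (m+2) 1, Nat.choose_one_right]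
    ring_nf
    ring_nf at ih
    omega

private lemma six_mul_choose_three (n : ℕ) : 6 * (n+3).choose 3 = (n+1)*(n+2)*(n+3) := by
  induction n with
  | zero => rfl
  | succ m ih =>
    rw [show m+1+3 = (m+3)+1 from rfl, Nat.choose_succ_succ (m+3) 2]
    have h2 := two_mul_choose_two (m+1)
    ring_nf
    ring_nf at ih h2
    omega

private lemma apply_le_sum (n : Fin 3 →₀ ℕ) (i : Fin 3) : n i ≤ n.sum fun _ e => e := by
  rcases eq_or_ne (n i) 0 with h | h
  · simp [h]
  · exact Finset.single_le_sum (fun _ _ => Nat.zero_le _) (Finsupp.mem_support_iff.mpr h)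

private def degSet (k : ℕ) : Set (Fin 3 →₀ ℕ) := {n | (n.sum fun _ e => e) ≤ k}

private lemma degSet_finite (k : ℕ) : (degSet k).Finite := by
  have h1 : Set.Finite {f : Fin 3 → ℕ | ∀ i, f i ≤ k} := by
    have := Set.Finite.pi (fun i : Fin 3 => Set.finite_Iic k)
    exact this.subset (fun f hf => by simpa [Set.mem_pi, Pi.le_def] using hf)
  have h2 : degSet k ⊆ (DFunLike.coe : (Fin 3 →₀ ℕ) → (Fin 3 → ℕ)) ⁻¹' {f | ∀ i, f i ≤ k} :=
    fun n hn i => le_trans (apply_le_sum n i) hn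
  exact ((h1.preimage (DFunLike.coe_injective.injOn)).subset h2)

private noncomputable def eqSym (d : ℕ) :
    {n : Fin 3 →₀ ℕ // (n.sum fun _ e => e) = d} ≃ Sym (Fin 3) d :=
  (Equiv.subtypeEquiv (Multiset.toFinsupp (α := Fin 3)).toEquiv (fun s => by
    show Multiset.card s = d ↔ ((Multiset.toFinsupp s).sum fun _ e => e) = d
    rw [show ((Multiset.toFinsupp s).sum fun _ e => e) = Multiset.card s from
      Multiset.toFinsupp_sum_eq s])).symm

private lemma card_eq_deg (d : ℕ) :
    Nat.card {n : Fin 3 →₀ ℕ | (n.sum fun _ e => e) = d} = (d+2).choose 2 := by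
  have h1 : Nat.card {n : Fin 3 →₀ ℕ | (n.sum fun _ e => e) = d} =
      Fintype.card (Sym (Fin 3) d) := by
    rw [← Nat.card_eq_fintype_card]
    exact Nat.card_congr (eqSym d)
  rw [h1, Sym.card_sym_eq_multichoose, Nat.multichoose_eq]
  simp only [Fintype.card_fin]
  rw [show 3 + d - 1 = d + 2 by omega]
  have h2 := Nat.choose_symm (n := d+2) (k := 2) (by omega)
  rw [show d + 2 - 2 = d by omega] at h2
  exact h2

private lemma card_degSet (k : ℕ) : Nat.card (degSet k) = (k+3).choose 3 := by
  induction k with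
  | zero =>
    have h : degSet 0 = {0} := by
      ext n
      simp only [degSet, Set.mem_setOf_eq, Set.mem_singleton_iff, Nat.le_zero]
      constructor
      · intro h
        ext i
        simpa using le_trans (apply_le_sum n i) h.le
      · rintro rfl; simp
    rw [h, Nat.card_coe_set_eq, Set.ncard_singleton]; rfl
  | succ m ih =>
    have hU : degSet (m+1) = degSet m ∪ {n | (n.sum fun _ e => e) = m+1} := by
      ext n; simp only [degSet, Set.mem_setOf_eq, Set.mem_union]; omega
    have hdisj : Disjoint (degSet m) {n : Fin 3 →₀ ℕ | (n.sum fun _ e => e) = m+1} := by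
      rw [Set.disjoint_left]
      intro n h1 h2
      simp only [degSet, Set.mem_setOf_eq] at h1 h2
      omega
    have hf2 : Set.Finite {n : Fin 3 →₀ ℕ | (n.sum fun _ e => e) = m+1} :=
      (degSet_finite (m+1)).subset (fun n hn => hn.le)
    rw [Nat.card_coe_set_eq, hU, Set.ncard_union_eq hdisj (degSet_finite m) hf2,
      ← Nat.card_coe_set_eq, ← Nat.card_coe_set_eq, ih, card_eq_deg]
    have hA : (m+1+3).choose 3 = (m+3).choose 2 + (m+3).choose 3 := by
      rw [show m+1+3 = m+3+1 by omega]
      exact Nat.choose_succ_succ' (m+3) 2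
    have hB : (m+1+2).choose 2 = (m+3).choose 2 := by
      rw [show m+1+2 = m+3 by omega]
    omega

/-! ### Dimension lemmas -/

private lemma finrank_RTD (k : ℕ) :
    Module.finrank ℝ (restrictTotalDegree (Fin 3) ℝ k) = (k+3).choose 3 := by
  letI : Fintype (degSet k) := (degSet_finite k).fintype
  have hb : Module.finrank ℝ (restrictSupport ℝ (degSet k)) = Fintype.card (degSet k) :=
    Module.finrank_eq_card_basis (basisRestrictSupport ℝ (degSet k))
  have he : restrictTotalDegree (Fin 3) ℝ k = restrictSupport ℝ (degSet k) := rfl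
  rw [he, hb, ← Nat.card_eq_fintype_card, card_degSet]

private def piSubEquiv {R : Type*} [Semiring R] {ι : Type*} {φ : ι → Type*}
    [∀ i, AddCommMonoid (φ i)] [∀ i, Module R (φ i)] (p : ∀ i, Submodule R (φ i)) :
    (Submodule.pi Set.univ p) ≃ₗ[R] ∀ i, p i where
  toFun v i := ⟨v.1 i, v.2 i (Set.mem_univ i)⟩
  map_add' _ _ := rfl
  map_smul' _ _ := rfl
  invFun v := ⟨fun i => v i, fun i _ => (v i).2⟩
  left_inv _ := rfl
  right_inv _ := rfl

private lemma finrank_polyVec (k : ℕ) :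
    Module.finrank ℝ (polyVec k) = 3 * (k+3).choose 3 := by
  rw [show polyVec k = Submodule.pi Set.univ (fun _ => restrictTotalDegree (Fin 3) ℝ k)
    from rfl]
  rw [LinearEquiv.finrank_eq (piSubEquiv (fun _ : Fin 3 => restrictTotalDegree (Fin 3) ℝ k)),
    Module.finrank_pi_fintype, Finset.sum_const, Finset.card_univ, Fintype.card_fin,
    finrank_RTD, smul_eq_mul]

private lemma mulByX_inj : Function.Injective mulByX := by
  intro a b h
  have h0 : X (0 : Fin 3) * a = X 0 * b := congrFun h 0
  exact mul_left_cancel₀ (X_ne_zero 0) h0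

private instance polyVec_fd (k : ℕ) : FiniteDimensional ℝ (polyVec k) :=
  Module.Finite.equiv
    (show ((i : Fin 3) → restrictTotalDegree (Fin 3) ℝ k) ≃ₗ[ℝ] polyVec k from
      (piSubEquiv (fun _ : Fin 3 => restrictTotalDegree (Fin 3) ℝ k)).symm)

private lemma finrank_map_RTD (k : ℕ) :
    Module.finrank ℝ (Submodule.map mulByX (restrictTotalDegree (Fin 3) ℝ k))
      = (k+3).choose 3 := by
  rw [← LinearEquiv.finrank_eq
    (Submodule.equivMapOfInjective mulByX mulByX_inj (restrictTotalDegree (Fin 3) ℝ k)),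
    finrank_RTD]

/-! ### The intersection -/

private lemma mulByX_apply (r : MvPolynomial (Fin 3) ℝ) (i : Fin 3) :
    mulByX r i = X i * r := rfl

private lemma deg_le_of {r : MvPolynomial (Fin 3) ℝ} {k : ℕ}
    (h : (X 0 * r).totalDegree ≤ k) (hr : r ≠ 0) : r.totalDegree + 1 ≤ k := by
  obtain ⟨s, hs, hsum⟩ := Finset.exists_mem_eq_sup r.support
    (support_nonempty.mpr hr) (fun s => s.sum fun _ e => e)
  have hc : coeff (Finsupp.single 0 1 + s) (X (0 : Fin 3) * r) = coeff s r :=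
    coeff_X_mul s 0 r
  have hmem : Finsupp.single (0 : Fin 3) 1 + s ∈ (X (0 : Fin 3) * r).support := by
    rw [mem_support_iff, hc]; exact mem_support_iff.mp hs
  have h2 := le_totalDegree hmem
  have hsum2 : ((Finsupp.single (0 : Fin 3) 1 + s).sum fun _ e => e)
      = 1 + (s.sum fun _ e => e) := by
    rw [Finsupp.sum_add_index' (fun _ => rfl) (fun _ _ _ => rfl),
      Finsupp.sum_single_index rfl]
  have hdeg : r.totalDegree = s.sum fun _ e => e := hsum
  omega

private lemma inf_eq_bot :
    polyVec 0 ⊓ Submodule.map mulByX (restrictTotalDegree (Fin 3) ℝ 0) = ⊥ := by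
  rw [eq_bot_iff]
  rintro v ⟨h1, r, _, rfl⟩
  rcases eq_or_ne r 0 with rfl | hr
  · simp
  · have h0 : mulByX r 0 ∈ restrictTotalDegree (Fin 3) ℝ 0 :=
      Submodule.mem_pi.mp h1 0 (Set.mem_univ 0)
    rw [mulByX_apply, mem_restrictTotalDegree] at h0
    exact absurd (deg_le_of h0 hr) (by omega)

private lemma inf_eq (m : ℕ) :
    polyVec (m+1) ⊓ Submodule.map mulByX (restrictTotalDegree (Fin 3) ℝ (m+1))
      = Submodule.map mulByX (restrictTotalDegree (Fin 3) ℝ m) := by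
  apply le_antisymm
  · rintro v ⟨h1, r, _, rfl⟩
    rcases eq_or_ne r 0 with rfl | hr
    · simp
    · have h0 : mulByX r 0 ∈ restrictTotalDegree (Fin 3) ℝ (m+1) :=
        Submodule.mem_pi.mp h1 0 (Set.mem_univ 0)
      rw [mulByX_apply, mem_restrictTotalDegree] at h0
      have := deg_le_of h0 hr
      exact ⟨r, (mem_restrictTotalDegree _ _ _).mpr (by omega), rfl⟩
  · rintro v ⟨r, hr0, rfl⟩
    have hr : r.totalDegree ≤ m := (mem_restrictTotalDegree _ _ _).mp hr0
    constructor
    · show mulByX r ∈ polyVec (m + 1)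
      refine Submodule.mem_pi.mpr (fun i _ => ?_)
      rw [mulByX_apply, mem_restrictTotalDegree]
      calc (X i * r).totalDegree ≤ (X i).totalDegree + r.totalDegree := totalDegree_mul _ _
        _ ≤ m + 1 := by rw [totalDegree_X]; omega
    · exact ⟨r, (mem_restrictTotalDegree _ _ _).mpr (by omega), rfl⟩

/-! ### Main theorem -/

theorem rt_dimension (p : ℕ) (hp : 1 ≤ p) :
    Module.finrank ℝ (RTSpace p) = p * (p + 1) * (p + 3) / 2 := by
  obtain ⟨k, rfl⟩ : ∃ k, p = k + 1 := ⟨p - 1, by omega⟩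
  have hRT : RTSpace (k+1)
      = polyVec k ⊔ Submodule.map mulByX (restrictTotalDegree (Fin 3) ℝ k) := rfl
  rw [hRT]
  have hmain := Submodule.finrank_sup_add_finrank_inf_eq (polyVec k)
    (Submodule.map mulByX (restrictTotalDegree (Fin 3) ℝ k))
  rw [finrank_polyVec, finrank_map_RTD] at hmain
  have hinf : Module.finrank ℝ
      (polyVec k ⊓ Submodule.map mulByX (restrictTotalDegree (Fin 3) ℝ k) :
        Submodule ℝ (Fin 3 → MvPolynomial (Fin 3) ℝ)) = (k+2).choose 3 := by
    cases k with
    | zero => rw [inf_eq_bot, finrank_bot]; rfl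
    | succ m =>
      rw [inf_eq m, finrank_map_RTD]
  rw [hinf] at hmain
  have h6A := six_mul_choose_three k
  have h6B : 6 * (k+2).choose 3 = k*(k+1)*(k+2) := by
    cases k with
    | zero => rfl
    | succ m => exact six_mul_choose_three m
  obtain ⟨c, hc⟩ : Even ((k+1)*(k+2)) := Nat.even_mul_succ_self (k+1)
  have hm3 : (k+1)*(k+1+1)*(k+1+3) = 2*(c*(k+4)) := by
    rw [show 2*(c*(k+4)) = (c+c)*(k+4) by ring, ← hc]
    try ring
  have hrel : 4*((k+1)*(k+2)*(k+3)) = 6*(c*(k+4)) + k*(k+1)*(k+2) := by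
    rw [show 6*(c*(k+4)) = 3*((c+c)*(k+4)) by ring, ← hc]
    try ring
  rw [hm3]
  generalize hP1 : (k+1)*(k+2)*(k+3) = P1 at h6A hrel
  generalize hP2 : k*(k+1)*(k+2) = P2 at h6B hrel
  generalize hX : c*(k+4) = Xv at hrel ⊢
  omega

end
end
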